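/- Let A_1, …, A_n and ρ be complex d×d matrices with ρ positive semidefinite, and let X = ∑_{i,j=1}^n X_{i,j} ⊗ |i⟩⟨j| be a positive semidefinite matrix on ℂ^d ⊗ ℂ^n with all diagonal blocks equal to the identity, X_{i,i} = 1. Then ∑_{i ≠ j} Re tr( X_{j,i} · A_i ρ A_j† ) ≤ ∑_{i ≠ j} ‖ A_i ρ A_j† ‖₁. -/

import Mathlib

open Matrix
open scoped ComplexOrder

/-- The trace norm `‖A‖₁ = tr √(Aᴴ A)` of a complex matrix. -/
noncomputable def traceNorm {m n : Type*} [Fintype m] [Fintype n] [DecidableEq n]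
    (A : Matrix m n ℂ) : ℝ :=
  ((Matrix.posSemidef_conjTranspose_mul_self A).1.eigenvectorUnitary.1 *
    diagonal (((↑) : ℝ → ℂ) ∘ (√·) ∘ (Matrix.posSemidef_conjTranspose_mul_self A).1.eigenvalues) *
    (star (Matrix.posSemidef_conjTranspose_mul_self A).1.eigenvectorUnitary : Matrix n n ℂ)).trace.re

noncomputable def nsq {d : ℕ} (u : Fin d → ℂ) : ℝ := (star u ⬝ᵥ u).re

lemma nsq_eq {d : ℕ} (u : Fin d → ℂ) : nsq u = ∑ a, Complex.normSq (u a) := by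
  simp only [nsq, dotProduct, Pi.star_apply, Complex.re_sum, RingHom.id_apply]
  refine Finset.sum_congr rfl fun a _ => ?_
  rw [Complex.star_def, Complex.conj_mul']
  simp [← Complex.ofReal_pow, Complex.sq_norm]

lemma nsq_nonneg {d : ℕ} (u : Fin d → ℂ) : 0 ≤ nsq u := by
  rw [nsq_eq]; exact Finset.sum_nonneg fun a _ => Complex.normSq_nonneg _

lemma eq_zero_of_nsq {d : ℕ} {u : Fin d → ℂ} (h : nsq u = 0) : u = 0 := by
  rw [nsq_eq] at h
  funext a
  have := (Finset.sum_eq_zero_iff_of_nonneg (fun a _ => Complex.normSq_nonneg (u a))).mp h a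
    (Finset.mem_univ a)
  simpa using Complex.normSq_eq_zero.mp this

lemma trace_eq_sum_dot {d : ℕ} (M V : Matrix (Fin d) (Fin d) ℂ)
    (hV : V * star V = 1) :
    M.trace = ∑ k, star (fun a => V a k) ⬝ᵥ M *ᵥ (fun a => V a k) := by
  have h1 : ∀ b a : Fin d, (∑ k, V b k * star (V a k)) = (1 : Matrix (Fin d) (Fin d) ℂ) b a := by
    intro b a; rw [← hV]; simp [Matrix.mul_apply, Matrix.conjTranspose_apply]
  calc M.trace = ∑ a, ∑ b, M a b * ((1 : Matrix (Fin d) (Fin d) ℂ) b a) := by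
        simp [Matrix.trace, Matrix.diag, Matrix.one_apply, mul_ite]
    _ = ∑ a, ∑ b, M a b * ∑ k, V b k * star (V a k) := by
        simp_rw [h1]
    _ = ∑ k, star (fun a => V a k) ⬝ᵥ M *ᵥ (fun a => V a k) := by
        simp only [dotProduct, mulVec, Pi.star_apply, Finset.mul_sum]
        conv_rhs => rw [Finset.sum_comm]
        refine Finset.sum_congr rfl fun a _ => ?_
        conv_rhs => rw [Finset.sum_comm]
        refine Finset.sum_congr rfl fun b _ => Finset.sum_congr rfl fun k _ => ?_
        ring

lemma blockBound {n d : ℕ} {X : Matrix (Fin d × Fin n) (Fin d × Fin n) ℂ}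
    (hX : X.PosSemidef)
    (hdiag : ∀ i : Fin n, (Matrix.of fun a b => X (a, i) (b, i)) =
      (1 : Matrix (Fin d) (Fin d) ℂ))
    {i j : Fin n} (hij : i ≠ j) (u v : Fin d → ℂ) :
    ‖star v ⬝ᵥ (Matrix.of fun a b => X (a, j) (b, i)) *ᵥ u‖
      ≤ Real.sqrt (nsq u) * Real.sqrt (nsq v) := by
  set t : ℂ := star v ⬝ᵥ (Matrix.of fun a b => X (a, j) (b, i)) *ᵥ u with ht_def
  by_cases ht : t = 0
  · rw [ht]
    simp only [norm_zero]
    positivity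
  have hu : u ≠ 0 := by
    rintro rfl; exact ht (by simp [ht_def])
  have hv : v ≠ 0 := by
    rintro rfl; exact ht (by simp [ht_def])
  have hu' : 0 < nsq u :=
    lt_of_le_of_ne (nsq_nonneg u) (fun h => hu (eq_zero_of_nsq h.symm))
  have hv' : 0 < nsq v :=
    lt_of_le_of_ne (nsq_nonneg v) (fun h => hv (eq_zero_of_nsq h.symm))
  -- the key inequality coming from positive semidefiniteness of X
  have main : ∀ s : ℂ, 0 ≤ Complex.normSq s * nsq u + nsq v + 2 * (s * t).re := by
    intro s
    set w : Fin d × Fin n → ℂ := fun p =>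
      (if p.2 = i then s * u p.1 else 0) + (if p.2 = j then v p.1 else 0) with hw_def
    have hpos := hX.dotProduct_mulVec_nonneg w
    have hre : 0 ≤ (star w ⬝ᵥ X *ᵥ w).re := by
      have := (Complex.le_def.mp hpos).1
      simpa using this
    have hexp : star w ⬝ᵥ X *ᵥ w
        = star s * s * (star u ⬝ᵥ (Matrix.of fun a b => X (a, i) (b, i)) *ᵥ u)
        + star s * (star u ⬝ᵥ (Matrix.of fun a b => X (a, i) (b, j)) *ᵥ v)
        + s * (star v ⬝ᵥ (Matrix.of fun a b => X (a, j) (b, i)) *ᵥ u)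
        + star v ⬝ᵥ (Matrix.of fun a b => X (a, j) (b, j)) *ᵥ v := by
      simp only [hw_def, dotProduct, mulVec, Fintype.sum_prod_type, of_apply, Pi.star_apply,
        star_add, apply_ite (star : ℂ → ℂ), star_zero, star_mul',
        add_mul, mul_add, ite_mul, mul_ite, zero_mul, mul_zero, zero_add, add_zero,
        Finset.sum_add_distrib, Finset.sum_ite_eq, Finset.sum_ite_eq', Finset.mem_univ, if_true,
        Finset.mul_sum, Finset.sum_mul, Finset.sum_ite_irrel, Finset.sum_const_zero]
      simp only [mul_assoc, mul_comm, mul_left_comm]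
      ring_nf
      have e : ∀ x x_1, s * u x_1 * X (x, i) (x_1, i) * star s * star (u x)
          = s * star s * u x_1 * X (x, i) (x_1, i) * star (u x) := fun _ _ => by ring
      simp only [e]; ring
    -- the conjugate cross term
    have hsym : ∀ a b, X (a, i) (b, j) = star (X (b, j) (a, i)) := by
      intro a b
      conv_lhs => rw [← hX.1]
      simp [Matrix.conjTranspose_apply]
    have hz : star u ⬝ᵥ (Matrix.of fun a b => X (a, i) (b, j)) *ᵥ v = star t := by
      rw [ht_def]
      simp only [dotProduct, mulVec, of_apply, Pi.star_apply, star_sum, star_mul', star_star,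
        Finset.mul_sum]
      conv_rhs => rw [Finset.sum_comm]
      refine Finset.sum_congr rfl fun a _ => Finset.sum_congr rfl fun b _ => ?_
      rw [hsym a b]
      ring
    rw [hexp] at hre
    rw [hdiag i, hdiag j, hz] at hre
    have h11 : star s * s * (star u ⬝ᵥ (1 : Matrix (Fin d) (Fin d) ℂ) *ᵥ u)
        = (Complex.normSq s : ℂ) * (star u ⬝ᵥ u) := by
      rw [Matrix.one_mulVec]
      congr 1
      rw [Complex.star_def, Complex.normSq_eq_conj_mul_self]
    have h22 : star v ⬝ᵥ (1 : Matrix (Fin d) (Fin d) ℂ) *ᵥ v = star v ⬝ᵥ v := by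
      rw [Matrix.one_mulVec]
    rw [h11, h22] at hre
    have hconj : (star s * star t).re = (s * t).re := by
      rw [← star_mul']
      exact (Complex.conj_re _)
    calc (0:ℝ) ≤ ((Complex.normSq s : ℂ) * (star u ⬝ᵥ u) + star s * star t + s * t
          + star v ⬝ᵥ v).re := hre
      _ = Complex.normSq s * nsq u + nsq v + 2 * (s * t).re := by
          simp only [Complex.add_re, Complex.re_ofReal_mul, hconj, nsq]
          ring
  -- choose the optimal s
  set R := Real.sqrt (nsq u) with hR_def
  set S := Real.sqrt (nsq v) with hS_def
  set α := ‖t‖ with hα_def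
  have hR : 0 < R := Real.sqrt_pos.mpr hu'
  have hS : 0 < S := Real.sqrt_pos.mpr hv'
  have hα : 0 < α := by
    rw [hα_def]; exact norm_pos_iff.mpr ht
  have hR2 : R ^ 2 = nsq u := Real.sq_sqrt (nsq_nonneg u)
  have hS2 : S ^ 2 = nsq v := Real.sq_sqrt (nsq_nonneg v)
  set c : ℝ := -(S / R) / α with hc_def
  have key := main ((c : ℂ) * (starRingEnd ℂ t))
  have h1 : Complex.normSq ((c : ℂ) * (starRingEnd ℂ t)) = c ^ 2 * α ^ 2 := by
    rw [Complex.normSq_mul, Complex.normSq_conj, Complex.normSq_ofReal,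
      Complex.normSq_eq_norm_sq]
    ring
  have h2 : (((c : ℂ) * (starRingEnd ℂ t)) * t).re = c * α ^ 2 := by
    rw [mul_assoc, mul_comm (starRingEnd ℂ t) t, Complex.mul_conj]
    rw [← Complex.ofReal_mul]
    rw [Complex.ofReal_re, Complex.normSq_eq_norm_sq]
  rw [h1, h2, ← hR2, ← hS2] at key
  have hc2 : c ^ 2 * α ^ 2 * R ^ 2 = S ^ 2 := by
    rw [hc_def]; field_simp
  have hcα : c * α ^ 2 = -(S * α / R) := by
    rw [hc_def]; field_simp
  rw [hc2, hcα] at key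
  -- key : 0 ≤ S^2 + S^2 + 2 * -(S*α/R)
  have : S * α / R ≤ S ^ 2 := by linarith
  have h3 : S * α ≤ S ^ 2 * R := by
    rw [div_le_iff₀ hR] at this; linarith
  nlinarith [h3, hS, hR]

lemma holder {d : ℕ} (B C : Matrix (Fin d) (Fin d) ℂ)
    (hC : ∀ u v : Fin d → ℂ,
      ‖star v ⬝ᵥ C *ᵥ u‖ ≤ Real.sqrt (nsq u) * Real.sqrt (nsq v)) :
    ((C * B).trace).re ≤ traceNorm B := by
  have hH : (Bᴴ * B).PosSemidef := Matrix.posSemidef_conjTranspose_mul_self B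
  have hHer : (Bᴴ * B).IsHermitian := hH.1
  set V : Matrix (Fin d) (Fin d) ℂ := (hHer.eigenvectorUnitary : Matrix (Fin d) (Fin d) ℂ) with hV_def
  have hVsV : star V * V = 1 := Matrix.mem_unitaryGroup_iff'.mp hHer.eigenvectorUnitary.2
  have hVVs : V * star V = 1 := Matrix.mem_unitaryGroup_iff.mp hHer.eigenvectorUnitary.2
  set col : Fin d → (Fin d → ℂ) := fun k a => V a k with hcol_def
  have hcol1 : ∀ k, star (col k) ⬝ᵥ col k = 1 := by
    intro k
    have h := congrFun (congrFun hVsV k) k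
    simpa [Matrix.mul_apply, Matrix.conjTranspose_apply, dotProduct, Matrix.one_apply,
      hcol_def] using h
  have hcoleq : ∀ k, col k = ⇑(hHer.eigenvectorBasis k) := by
    intro k; funext a; rfl
  have heig : ∀ k, (Bᴴ * B) *ᵥ col k = hHer.eigenvalues k • col k := by
    intro k; rw [hcoleq k]; exact hHer.mulVec_eigenvectorBasis k
  have hTN : traceNorm B = ∑ k, Real.sqrt (hHer.eigenvalues k) := by
    unfold traceNorm
    rw [Matrix.trace_mul_comm, ← mul_assoc]
    have : (star (Matrix.posSemidef_conjTranspose_mul_self B).1.eigenvectorUnitary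
        : Matrix (Fin d) (Fin d) ℂ) * (Matrix.posSemidef_conjTranspose_mul_self B).1.eigenvectorUnitary.1
        = 1 := hVsV
    rw [this, one_mul, Matrix.trace_diagonal]
    simp [Complex.re_sum]
  rw [hTN, trace_eq_sum_dot (C * B) V hVVs, Complex.re_sum]
  apply Finset.sum_le_sum
  intro k _
  have hx : nsq (B *ᵥ col k) = hHer.eigenvalues k := by
    unfold nsq
    rw [Matrix.star_mulVec, ← Matrix.dotProduct_mulVec, Matrix.mulVec_mulVec, heig k]
    have : star (col k) ⬝ᵥ (hHer.eigenvalues k • col k)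
        = (hHer.eigenvalues k : ℂ) * (star (col k) ⬝ᵥ col k) := by
      simp only [dotProduct, Pi.smul_apply, Complex.real_smul, Finset.mul_sum]
      exact Finset.sum_congr rfl fun a _ => by ring
    rw [this, hcol1 k]
    simp
  have hone : nsq (col k) = 1 := by
    unfold nsq; rw [hcol1 k]; simp
  calc (star (fun a => V a k) ⬝ᵥ (C * B) *ᵥ fun a => V a k).re
      ≤ ‖star (fun a => V a k) ⬝ᵥ (C * B) *ᵥ fun a => V a k‖ := Complex.re_le_norm _
    _ = ‖star (col k) ⬝ᵥ C *ᵥ (B *ᵥ col k)‖ := by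
        rw [Matrix.mulVec_mulVec]
    _ ≤ Real.sqrt (nsq (B *ᵥ col k)) * Real.sqrt (nsq (col k)) := hC _ _
    _ = Real.sqrt (hHer.eigenvalues k) := by
        rw [hx, hone, Real.sqrt_one, mul_one]

/-- Let `ρ` be positive semidefinite, and `X` a positive semidefinite matrix on
`ℂ^d ⊗ ℂ^n` with blocks `X i j = (fun a b => X (a, i) (b, j))` whose diagonal blocks equal the
identity. Then `∑_{i ≠ j} Re tr(X j i · A i ρ A jᴴ) ≤ ∑_{i ≠ j} ‖A i ρ A jᴴ‖₁`. -/
theorem dual_objective_le_l1_povm_coherence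
    (n d : ℕ) (A : Fin n → Matrix (Fin d) (Fin d) ℂ)
    (ρ : Matrix (Fin d) (Fin d) ℂ) (hρ : ρ.PosSemidef)
    (X : Matrix (Fin d × Fin n) (Fin d × Fin n) ℂ)
    (hX : X.PosSemidef)
    (hdiag : ∀ i : Fin n, (Matrix.of fun a b => X (a, i) (b, i)) =
      (1 : Matrix (Fin d) (Fin d) ℂ)) :
    ∑ q ∈ (Finset.univ : Finset (Fin n)).offDiag,
        ((Matrix.of fun a b => X (a, q.2) (b, q.1)) *
          (A q.1 * ρ * (A q.2)ᴴ)).trace.re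
      ≤ ∑ q ∈ (Finset.univ : Finset (Fin n)).offDiag,
          traceNorm (A q.1 * ρ * (A q.2)ᴴ) := by
  apply Finset.sum_le_sum
  intro q hq
  rw [Finset.mem_offDiag] at hq
  exact holder _ _ (fun u v => blockBound hX hdiag hq.2.2 u v)
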